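/- Let p be a prime and G a finite group which is p-constrained, i.e. C_T(O_p(G)) ≤ O_p(G) for some (any) Sylow p-subgroup T of G. Then the quotient G/O_{p'}(G) has characteristic p, meaning that C_{G/O_{p'}(G)}(O_p(G/O_{p'}(G))) ≤ O_p(G/O_{p'}(G)). -/

import Mathlib

open Subgroup Pointwise

lemma myCentralizerNormal {G : Type*} [Group G] (P : Subgroup G) (h : P.Normal) :
    (Subgroup.centralizer (P : Set G)).Normal := by
  constructor
  intro c hc g
  rw [Subgroup.mem_centralizer_iff] at hc ⊢
  intro x hx
  have hx' : g⁻¹ * x * g ∈ P := by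
    have := h.conj_mem x hx g⁻¹
    simpa using this
  have key := hc _ hx'
  calc x * (g * c * g⁻¹) = g * ((g⁻¹ * x * g) * c) * g⁻¹ := by group
    _ = g * (c * (g⁻¹ * x * g)) * g⁻¹ := by rw [key]
    _ = (g * c * g⁻¹) * x := by group


/-- `P` is the largest normal `p`-subgroup `O_p(G)` of `G`. -/
def IsPCore (p : ℕ) {G : Type*} [Group G] (P : Subgroup G) : Prop :=
  P.Normal ∧ IsPGroup p ↥P ∧ ∀ Q : Subgroup G, Q.Normal → IsPGroup p ↥Q → Q ≤ P

/-- `N` is the largest normal `p'`-subgroup `O_{p'}(G)` of `G`. -/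
def IsPPrimeCore (p : ℕ) {G : Type*} [Group G] (N : Subgroup G) : Prop :=
  N.Normal ∧ (Nat.card ↥N).Coprime p ∧
    ∀ M : Subgroup G, M.Normal → (Nat.card ↥M).Coprime p → M ≤ N

lemma myCardCoprime {H : Type*} [Group H] [Finite H] {p : ℕ} (hp : p.Prime)
    (h : ∀ x : H, (orderOf x).Coprime p) : (Nat.card H).Coprime p := by
  by_contra hc
  have hdvd : p ∣ Nat.card H := by
    by_contra hd
    exact hc (Nat.Coprime.symm ((Nat.Prime.coprime_iff_not_dvd hp).mpr hd))
  obtain ⟨x, hx⟩ := exists_prime_orderOf_dvd_card' p (hp := Fact.mk hp) hdvd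
  have := h x
  rw [hx] at this
  have h1 : p = 1 := by simpa [Nat.Coprime, Nat.gcd_self] using this
  exact hp.one_lt.ne' h1


lemma myQuotientPPrimeTrivial {G : Type*} [Group G] [Finite G] {p : ℕ} (hp : p.Prime)
    (N : Subgroup G) [N.Normal] (hN : IsPPrimeCore p N)
    (M' : Subgroup (G ⧸ N)) (hnorm : M'.Normal) (hcop : (Nat.card M').Coprime p) :
    M' = ⊥ := by
  set π := QuotientGroup.mk' N with hπ
  have hsurj : Function.Surjective π := QuotientGroup.mk'_surjective N
  set M : Subgroup G := M'.comap π with hM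
  have hMnorm : M.Normal := hnorm.comap π
  have hNdvd : ¬ p ∣ Nat.card N := (Nat.Prime.coprime_iff_not_dvd hp).mp hN.2.1.symm
  have hMcop : (Nat.card M).Coprime p := by
    apply myCardCoprime hp
    intro x
    by_contra hc
    have hdvd : p ∣ orderOf x := by
      by_contra hd
      exact hc (((Nat.Prime.coprime_iff_not_dvd hp).mpr hd).symm)
    -- get element of order p in M
    obtain ⟨m, hm⟩ := exists_prime_orderOf_dvd_card' p (hp := Fact.mk hp)
      (hdvd.trans (orderOf_dvd_natCard x))
    -- m : ↥M with orderOf m = p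
    have hmG : orderOf ((m : ↥M) : G) = p := by
      rw [Subgroup.orderOf_coe]; exact hm
    have hπm : π (m : G) ∈ M' := (m : ↥M).2
    have h1 : orderOf (π (m : G)) ∣ p := hmG ▸ orderOf_map_dvd π (m : G)
    have h2 : orderOf (π (m : G)) ∣ Nat.card M' := by
      have := orderOf_dvd_natCard (⟨π (m : G), hπm⟩ : ↥M')
      rwa [Subgroup.orderOf_mk] at this
    have h3 : orderOf (π (m : G)) = 1 := Nat.eq_one_of_dvd_coprimes hcop.symm h1 h2
    have h4 : (m : G) ∈ N := by
      rw [← QuotientGroup.ker_mk' N]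
      exact orderOf_eq_one_iff.mp h3
    have : orderOf ((m:G)) ∣ Nat.card N := by
      have := orderOf_dvd_natCard (⟨(m : G), h4⟩ : ↥N)
      rwa [Subgroup.orderOf_mk] at this
    rw [hmG] at this
    exact hNdvd this
  have hMN : M ≤ N := hN.2.2 M hMnorm hMcop
  have : M' = M.map π := (Subgroup.map_comap_eq_self_of_surjective hsurj M').symm
  rw [this]
  rw [eq_bot_iff]
  rintro x ⟨g, hg, rfl⟩
  have : g ∈ N := hMN hg
  simpa [π] using (QuotientGroup.eq_one_iff g).mpr this

/-- If a finite group `G` is `p`-constrained, i.e. `C_T(O_p(G)) ≤ O_p(G)` for a Sylow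
`p`-subgroup `T`, then `G/O_{p'}(G)` has characteristic `p`. -/
theorem pConstrained_quotient_pPrimeCore_char_p
    {G : Type*} [Group G] [Finite G] {p : ℕ} [Fact p.Prime]
    (P : Subgroup G) (hP : IsPCore p P)
    (T : Sylow p G)
    (hcon : (T : Subgroup G) ⊓ Subgroup.centralizer (P : Set G) ≤ P)
    (N : Subgroup G) [N.Normal] (hN : IsPPrimeCore p N)
    (P' : Subgroup (G ⧸ N)) (hP' : IsPCore p P') :
    Subgroup.centralizer (P' : Set (G ⧸ N)) ≤ P' := by
  have hp : p.Prime := Fact.out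
  set π := QuotientGroup.mk' N with hπdef
  have hsurj : Function.Surjective π := QuotientGroup.mk'_surjective N
  set R : Subgroup G := P'.comap π with hRdef
  haveI hRnorm : R.Normal := hP'.1.comap π
  -- P ≤ R
  have hmapP : P.map π ≤ P' := hP'.2.2 _ (hP.1.map π hsurj) (hP.2.1.map π)
  have hPR : P ≤ R := fun x hx => hmapP ⟨x, hx, rfl⟩
  -- Sylow p-subgroup of R containing P
  obtain ⟨Q₀, hQ₀⟩ := (IsPGroup.comap_subtype hP.2.1 (K := R)).exists_le_sylow
  set Q' : Subgroup G := (Q₀ : Subgroup ↥R).map R.subtype with hQ'def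
  have hQ'R : Q' ≤ R := map_subtype_le _
  have hPQ' : P ≤ Q' := by
    intro x hx
    exact ⟨⟨x, hPR hx⟩, hQ₀ hx, rfl⟩
  have hQ'pg : IsPGroup p ↥Q' := Q₀.2.map R.subtype
  -- Q' ⊓ N = ⊥
  have hQ'N : Q' ⊓ N = ⊥ := by
    obtain ⟨n, hn⟩ := (IsPGroup.iff_card).mp hQ'pg
    exact inf_eq_bot_of_coprime (by rw [hn]; exact (hN.2.1.symm).pow_left n)
  -- map π Q' = P'
  have hmapQ' : Q'.map π = P' := by
    apply le_antisymm (map_le_iff_le_comap.mpr hQ'R)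
    -- build surjection φ : ↥R →* ↥P'
    have hmem : ∀ r : ↥R, π (r : G) ∈ P' := fun r => r.2
    set φ : ↥R →* ↥P' := (π.comp R.subtype).codRestrict P' hmem with hφdef
    have hφsurj : Function.Surjective φ := by
      rintro ⟨y, hy⟩
      obtain ⟨g, rfl⟩ := hsurj y
      exact ⟨⟨g, hy⟩, rfl⟩
    have htop : ((Sylow.mapSurjective hφsurj Q₀ : Sylow p ↥P') : Subgroup ↥P') = ⊤ := by
      have hpgtop : IsPGroup p (⊤ : Subgroup ↥P') := hP'.2.1.of_equiv Subgroup.topEquiv.symm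
      exact ((Sylow.mapSurjective hφsurj Q₀).3 hpgtop le_top).symm
    intro y hy
    have : (⟨y, hy⟩ : ↥P') ∈ ((Sylow.mapSurjective hφsurj Q₀ : Sylow p ↥P') : Subgroup ↥P') := by
      rw [htop]; trivial
    rw [Sylow.coe_mapSurjective] at this
    obtain ⟨q, hq, hq2⟩ := this
    refine ⟨R.subtype q, ⟨q, hq, rfl⟩, ?_⟩
    have := congrArg (Subtype.val) hq2
    exact this
  -- R = Q' ⊔ N
  have hReq : Q' ⊔ N = R := by
    have := Subgroup.comap_map_eq π Q'
    rw [hmapQ', QuotientGroup.ker_mk'] at this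
    exact this.symm
  -- Frattini
  have hFrat : (Subgroup.normalizer (Q' : Set G)) ⊔ N = ⊤ := by
    have h1 : (Subgroup.normalizer ((Q₀.map R.subtype : Subgroup G) : Set G)) ⊔ R = ⊤ := Sylow.normalizer_sup_eq_top Q₀
    have h2 : (Subgroup.normalizer (Q' : Set G)) ⊔ (Q' ⊔ N) = ⊤ := by rw [hReq]; exact h1
    rwa [← sup_assoc, sup_of_le_left Subgroup.le_normalizer] at h2
  have hdecomp : ∀ d : G, ∃ m ∈ (Subgroup.normalizer (Q' : Set G)), ∃ n ∈ N, d = m * n := by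
    intro d
    have hd : d ∈ (((Subgroup.normalizer (Q' : Set G)) ⊔ N : Subgroup G) : Set G) := by rw [hFrat]; trivial
    rw [Subgroup.mul_normal] at hd
    obtain ⟨m, hm, n, hn, h⟩ := hd
    exact ⟨m, hm, n, hn, h.symm⟩
  set C : Subgroup (G ⧸ N) := Subgroup.centralizer (P' : Set (G ⧸ N)) with hCdef
  set E : Subgroup G := Subgroup.centralizer (Q' : Set G) with hEdef
  -- map π E = C
  have hEC : E.map π = C := by
    apply le_antisymm
    · rintro x ⟨e, he, rfl⟩
      rw [Subgroup.mem_centralizer_iff]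
      intro h hh
      rw [← hmapQ'] at hh
      obtain ⟨q, hq, rfl⟩ := hh
      have := he q hq
      simp only [← map_mul, this]
    · intro c hc
      obtain ⟨d, rfl⟩ := hsurj c
      obtain ⟨m, hm, n, hn, rfl⟩ := hdecomp d
      have hπn : π n = 1 := (QuotientGroup.eq_one_iff n).mpr hn
      have hπmn : π (m * n) = π m := by rw [map_mul, hπn, mul_one]
      rw [hπmn] at hc ⊢
      refine ⟨m, ?_, rfl⟩
      show m ∈ Subgroup.centralizer (Q' : Set G)
      rw [Subgroup.mem_centralizer_iff]
      intro q hq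
      -- y := m⁻¹ * q⁻¹ * m * q ∈ Q' ⊓ N = ⊥
      have hq' : m⁻¹ * q⁻¹ * m ∈ Q' := by
        have := (Subgroup.mem_normalizer_iff.mp ((Subgroup.normalizer (Q' : Set G)).inv_mem hm) q⁻¹).mp
          (Q'.inv_mem hq)
        simpa [mul_assoc] using this
      have hyQ : m⁻¹ * q⁻¹ * m * q ∈ Q' := Q'.mul_mem hq' hq
      have hyN : m⁻¹ * q⁻¹ * m * q ∈ N := by
        rw [← QuotientGroup.ker_mk' N, MonoidHom.mem_ker]
        have hπq : π q ∈ P' := by rw [← hmapQ']; exact ⟨q, hq, rfl⟩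
        have hcomm := (Subgroup.mem_centralizer_iff.mp hc) (π q) hπq
        simp only [map_mul, map_inv]
        rw [mul_assoc, ← hcomm]
        simp only [← hπdef]
        group
      have hy : m⁻¹ * q⁻¹ * m * q = 1 := by
        have : m⁻¹ * q⁻¹ * m * q ∈ Q' ⊓ N := ⟨hyQ, hyN⟩
        rwa [hQ'N, Subgroup.mem_bot] at this
      have : q * m = m * q := by
        have h2 := congrArg (fun w => q * m * w) hy
        simpa [mul_assoc] using h2.symm
      exact this
  -- Sylow of E is contained in P
  obtain ⟨S₀⟩ : Nonempty (Sylow p ↥E) := Sylow.nonempty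
  set S' : Subgroup G := (S₀ : Subgroup ↥E).map E.subtype with hS'def
  have hS'E : S' ≤ E := map_subtype_le _
  have hS'pg : IsPGroup p ↥S' := S₀.2.map E.subtype
  have hS'cent : ∀ s ∈ S', ∀ x ∈ Q', x * s = s * x := fun s hs => hS'E hs
  have hS'norm : S' ≤ (Subgroup.normalizer (Q' : Set G)) := by
    intro s hs
    rw [Subgroup.mem_normalizer_iff]
    intro x
    constructor
    · intro hx
      have h1 := hS'cent s hs x hx
      have heq : s * x * s⁻¹ = x := by rw [← h1]; group
      rw [heq]; exact hx
    · intro hx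
      have h2 := hS'cent s hs _ hx
      have heq : x = s * x * s⁻¹ := by
        calc x = s⁻¹ * ((s * x * s⁻¹) * s) := by group
          _ = s⁻¹ * (s * (s * x * s⁻¹)) := by rw [h2]
          _ = s * x * s⁻¹ := by group
      rw [heq]; exact hx
  -- S' ≤ P
  obtain ⟨T₁, hT₁⟩ := (IsPGroup.to_sup_of_normal_right' hS'pg hQ'pg hS'norm).exists_le_sylow
  haveI hcentPnorm : (Subgroup.centralizer (P : Set G)).Normal := myCentralizerNormal P hP.1
  have hconT₁ : (T₁ : Subgroup G) ⊓ Subgroup.centralizer (P : Set G) ≤ P := by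
    obtain ⟨g, hg⟩ := MulAction.exists_smul_eq G T T₁
    rintro x ⟨hxT, hxC⟩
    have hxT' : g⁻¹ * x * g ∈ (T : Subgroup G) := by
      rw [← hg] at hxT
      have : x ∈ MulAut.conj g • (T : Subgroup G) := hxT
      rw [Subgroup.mem_pointwise_smul_iff_inv_smul_mem] at this
      simpa [mul_assoc] using this
    have hxC' : g⁻¹ * x * g ∈ Subgroup.centralizer (P : Set G) := by
      have := hcentPnorm.conj_mem x hxC g⁻¹
      simpa using this
    have := hcon ⟨hxT', hxC'⟩
    have h2 := hP.1.conj_mem _ this g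
    simpa [mul_assoc] using h2
  have hS'P : S' ≤ P := by
    intro s hs
    refine hconT₁ ⟨hT₁ (le_sup_left (a := S') (b := Q') hs),
      Subgroup.mem_centralizer_iff.mpr fun x hx => hS'cent s hs x (hPQ' hx)⟩
  -- Z₁ = Q' ⊓ E contains a Sylow p-subgroup of E and is central in E
  set Z₁ : Subgroup G := Q' ⊓ E with hZ₁def
  have hS'Z₁ : S' ≤ Z₁ := le_inf (hS'P.trans hPQ') hS'E
  set Z₂ : Subgroup ↥E := Z₁.subgroupOf E with hZ₂def
  have hS₀Z₂ : (S₀ : Subgroup ↥E) ≤ Z₂ := by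
    intro x hx
    exact Subgroup.mem_subgroupOf.mpr (hS'Z₁ ⟨x, hx, rfl⟩)
  have hZ₁pg : IsPGroup p ↥Z₁ := hQ'pg.to_le inf_le_left
  have hZ₂pg : IsPGroup p ↥Z₂ := hZ₁pg.comap_subtype
  have hZ₂eq : Z₂ = (S₀ : Subgroup ↥E) := S₀.3 hZ₂pg hS₀Z₂
  have hZ₂index : ¬ p ∣ Z₂.index := by
    rw [hZ₂eq]
    exact S₀.not_dvd_index
  -- Z₂ is central in E
  have hZ₂central : ∀ z ∈ Z₂, ∀ x : ↥E, z * x = x * z := by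
    intro z hz x
    have hz1 : (z : G) ∈ Q' := (Subgroup.mem_subgroupOf.mp hz).1
    have hx1 : (x : G) ∈ Subgroup.centralizer (Q' : Set G) := x.2
    have := hx1 (z : G) hz1
    exact Subtype.ext this
  haveI hZ₂norm : Z₂.Normal := by
    constructor
    intro z hz e
    have heq : e * z * e⁻¹ = z := by
      rw [← hZ₂central z hz e]
      group
    rw [heq]; exact hz
  -- Schur-Zassenhaus complement
  have hZ₂cop : Nat.Coprime (Nat.card Z₂) Z₂.index := by
    obtain ⟨k, hk⟩ := IsPGroup.iff_card.mp hZ₂pg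
    rw [hk]
    exact Nat.Coprime.pow_left _ ((hp.coprime_iff_not_dvd).mpr hZ₂index)
  obtain ⟨K, hK⟩ := Subgroup.exists_right_complement'_of_coprime hZ₂cop
  have hKcard : (Nat.card K).Coprime p := by
    have h1 : Z₂.index = Nat.card K := hK.symm.index_eq_card
    rw [← h1]
    exact ((hp.coprime_iff_not_dvd).mpr hZ₂index).symm
  -- K is normal in E
  have hKnormE : ∀ e : ↥E, ∀ k ∈ K, e * k * e⁻¹ ∈ K := by
    intro e k hk
    obtain ⟨⟨⟨z, hz⟩, ⟨k', hk'⟩⟩, hzk, -⟩ := hK.existsUnique e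
    simp only at hzk
    have hw : k' * k * k'⁻¹ ∈ K := K.mul_mem (K.mul_mem hk' hk) (K.inv_mem hk')
    have hcomm := hZ₂central z hz (k' * k * k'⁻¹)
    have heq : e * k * e⁻¹ = k' * k * k'⁻¹ := by
      rw [← hzk]
      calc (z * k') * k * (z * k')⁻¹ = z * (k' * k * k'⁻¹) * z⁻¹ := by group
        _ = (k' * k * k'⁻¹) * z * z⁻¹ := by rw [hcomm]
        _ = k' * k * k'⁻¹ := by group
    rw [heq]; exact hw
  set K' : Subgroup G := K.map E.subtype with hK'def
  set Kb : Subgroup (G ⧸ N) := K'.map π with hKbdef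
  have hK'E : K' ≤ E := map_subtype_le _
  have hKbC : Kb ≤ C := by
    rw [← hEC]
    exact map_mono hK'E
  -- orders of elements of Kb are coprime to p
  have hordKb : ∀ x ∈ Kb, (orderOf x).Coprime p := by
    rintro x ⟨e, ⟨k, hk, rfl⟩, rfl⟩
    have h1 : orderOf (π (E.subtype k)) ∣ orderOf (E.subtype k) := orderOf_map_dvd π _
    have h2 : orderOf (E.subtype k) = orderOf k := Subgroup.orderOf_coe k
    have h3 : orderOf k ∣ Nat.card K := by
      have := orderOf_dvd_natCard (⟨k, hk⟩ : ↥K)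
      rwa [Subgroup.orderOf_mk] at this
    exact Nat.Coprime.coprime_dvd_left (h1.trans (h2 ▸ h3)) hKcard
  set Zb : Subgroup (G ⧸ N) := Z₁.map π with hZbdef
  have hZbP' : Zb ≤ P' := le_trans (map_mono inf_le_left) (le_of_eq hmapQ')
  -- decomposition of C
  have hdecompC : ∀ c ∈ C, ∃ z ∈ Zb, ∃ k ∈ Kb, c = z * k := by
    intro c hc
    rw [← hEC] at hc
    obtain ⟨e, he, rfl⟩ := hc
    obtain ⟨⟨⟨z, hz⟩, ⟨k, hk⟩⟩, hzk, -⟩ := hK.existsUnique (⟨e, he⟩ : ↥E)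
    simp only at hzk
    refine ⟨π ((z : ↥E) : G), ⟨(z : G), Subgroup.mem_subgroupOf.mp hz, rfl⟩,
      π ((k : ↥E) : G), ⟨(k : G), ⟨k, hk, rfl⟩, rfl⟩, ?_⟩
    rw [← map_mul]
    congr 1
    have := congrArg (Subtype.val (p := fun x => x ∈ E)) hzk
    simpa using this.symm
  -- p'-elements of C are in Kb
  have hmemKb : ∀ x ∈ C, (orderOf x).Coprime p → x ∈ Kb := by
    intro x hx hord
    obtain ⟨z, hz, k, hk, rfl⟩ := hdecompC x hx
    have hzc : ∀ c ∈ C, z * c = c * z :=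
      fun c hc => Subgroup.mem_centralizer_iff.mp hc z (hZbP' hz)
    have hcommzk : Commute z k := hzc k (hKbC hk)
    -- z has p-power order
    obtain ⟨t, ht⟩ := hP'.2.1 (⟨z, hZbP' hz⟩ : ↥P')
    have htz : z ^ (p ^ t) = 1 := by
      have := congrArg (Subtype.val (p := fun y => y ∈ P')) ht
      simpa using this
    set n := orderOf (z * k) with hn
    rcases eq_or_lt_of_le (Nat.one_le_iff_ne_zero.mpr
      (orderOf_pos (z * k)).ne') with h1 | h1
    · have : z * k = 1 := orderOf_eq_one_iff.mp h1.symm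
      rw [this]; exact Kb.one_mem
    · have hcop : (p ^ t).Coprime n := (hord.symm).pow_left t
      obtain ⟨u, -, hu⟩ := Nat.exists_mul_mod_eq_one_of_coprime hcop h1
      have key : z * k = ((z * k) ^ (p ^ t)) ^ u := by
        rw [← pow_mul]
        conv_lhs => rw [← pow_one (z * k), ← hu, pow_mod_orderOf]
      rw [key, hcommzk.mul_pow, htz, one_mul, ← pow_mul]
      exact Kb.pow_mem hk _
  -- Kb is normal in G ⧸ N
  haveI hCnorm : C.Normal := myCentralizerNormal P' hP'.1
  have hKbnorm : Kb.Normal := by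
    constructor
    intro k hk g
    have h1 : g * k * g⁻¹ ∈ C := hCnorm.conj_mem k (hKbC hk) g
    have h2 : orderOf (g * k * g⁻¹) = orderOf k := by
      have : g * k * g⁻¹ = (MulAut.conj g) k := by simp [MulAut.conj_apply]
      rw [this, (MulAut.conj g).orderOf_eq k]
    exact hmemKb _ h1 (h2 ▸ hordKb k hk)
  have hKbcop : (Nat.card Kb).Coprime p := by
    apply myCardCoprime hp
    intro x
    have := hordKb (x : G ⧸ N) x.2
    rwa [Subgroup.orderOf_coe] at this
  have hKbbot : Kb = ⊥ := myQuotientPPrimeTrivial hp N hN Kb hKbnorm hKbcop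
  -- conclude
  intro x hx
  obtain ⟨z, hz, k, hk, rfl⟩ := hdecompC x hx
  rw [hKbbot, Subgroup.mem_bot] at hk
  rw [hk, mul_one]
  exact hZbP' hz
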